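/- Let G be a connected graph of order n with independence number α(G). Then th₊(G) ≤ n − α(G) + 1. -/

import Mathlib

open SimpleGraph

/-- Reachability in `G` avoiding the blue set `B` (i.e., within a white component). -/
def offReach {V : Type*} (G : SimpleGraph V) (B : Set V) : V → V → Prop :=
  Relation.ReflTransGen (fun a b => G.Adj a b ∧ a ∉ B ∧ b ∉ B)

/-- The positive semidefinite color change rule: a blue vertex `v` forces a white vertex `w`
if `w` is the unique white neighbor of `v` in the white component of `w` (together with `B`). -/
def psdForces {V : Type*} (G : SimpleGraph V) (B : Set V) (v w : V) : Prop :=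
  v ∈ B ∧ w ∉ B ∧ G.Adj v w ∧
    ∀ u, u ∉ B → G.Adj v u → offReach G B u w → u = w

/-- One round of PSD forcing: perform all possible forces. -/
def psdStep {V : Type*} (G : SimpleGraph V) (B : Set V) : Set V :=
  B ∪ {w | ∃ v, psdForces G B v w}

/-- `S` is a positive semidefinite zero forcing set. -/
def IsPSDForcingSet {V : Type*} (G : SimpleGraph V) (S : Set V) : Prop :=
  ∃ t, (psdStep G)^[t] S = Set.univ

/-- The PSD propagation time of `S`. -/
noncomputable def psdPt {V : Type*} (G : SimpleGraph V) (S : Set V) : ℕ :=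
  sInf {t | (psdStep G)^[t] S = Set.univ}

/-- The PSD throttling number of `G`. -/
noncomputable def psdTh {V : Type*} (G : SimpleGraph V) [Fintype V] : ℕ :=
  sInf {k | ∃ S : Finset V, IsPSDForcingSet G ↑S ∧ k = S.card + psdPt G ↑S}

/-- The independence number of a graph on a finite vertex type. -/
noncomputable def indepNumber {V : Type*} [Fintype V] (G : SimpleGraph V) : ℕ :=
  sSup {k | ∃ A : Finset V, A.card = k ∧ ∀ a ∈ A, ∀ b ∈ A, a ≠ b → ¬ G.Adj a b}

theorem stmt_7 {V : Type*} [Fintype V] (G : SimpleGraph V) (hG : G.Connected) :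
    psdTh G ≤ Fintype.card V - indepNumber G + 1 := by
  classical
  -- obtain a maximum independent set A
  have hne : ({k | ∃ A : Finset V, A.card = k ∧ ∀ a ∈ A, ∀ b ∈ A, a ≠ b → ¬ G.Adj a b} : Set ℕ).Nonempty :=
    ⟨0, ∅, rfl, by simp⟩
  have hbdd : BddAbove {k | ∃ A : Finset V, A.card = k ∧ ∀ a ∈ A, ∀ b ∈ A, a ≠ b → ¬ G.Adj a b} := by
    refine ⟨Fintype.card V, ?_⟩
    rintro k ⟨A, hA, -⟩
    exact hA ▸ A.card_le_univ
  obtain ⟨A, hAcard, hAind⟩ := Nat.sSup_mem hne hbdd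
  by_cases hc : Fintype.card V ≤ 1
  · -- small case: use S = univ
    have h1 : psdTh G ≤ Fintype.card V := by
      apply Nat.sInf_le
      refine ⟨Finset.univ, ⟨0, by simp⟩, ?_⟩
      have hpt : psdPt G (Set.univ : Set V) = 0 :=
        Nat.sInf_eq_zero.mpr (Or.inl (by simp))
      simp [Finset.coe_univ, hpt]
    omega
  · push_neg at hc
    set B : Set V := ↑(Aᶜ : Finset V) with hB
    have hmemB : ∀ x, x ∈ B ↔ x ∉ A := by intro x; simp [hB]
    -- every vertex has a neighbor
    have hnb : ∀ w : V, ∃ v, G.Adj v w := by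
      intro w
      obtain ⟨v, hv⟩ := Fintype.exists_ne_of_one_lt_card hc w
      obtain ⟨p⟩ := hG.preconnected w v
      cases p with
      | nil => exact absurd rfl hv.symm
      | cons h p => exact ⟨_, h.symm⟩
    -- need neighbor of w adjacent to w: we got v with G.Adj v w? fix below
    have key : psdStep G B = Set.univ := by
      ext w
      simp only [Set.mem_univ, iff_true]
      by_cases hw : w ∈ B
      · exact Or.inl hw
      · have hwA : w ∈ A := by by_contra h; exact hw ((hmemB w).mpr h)
        obtain ⟨v, hv⟩ := hnb w
        have hvB : v ∈ B := by
          rw [hmemB]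
          intro hvA
          exact hAind v hvA w hwA (G.ne_of_adj hv) hv
        refine Or.inr ⟨v, hvB, hw, hv, ?_⟩
        intro u huB _ hreach
        have huA : u ∈ A := by by_contra h; exact huB ((hmemB u).mpr h)
        rcases Relation.ReflTransGen.cases_head hreach with h | ⟨c, ⟨hadj, huB', hcB⟩, _⟩
        · exact h
        · have hcA : c ∈ A := by by_contra h; exact hcB ((hmemB c).mpr h)
          exact absurd hadj (hAind u huA c hcA (G.ne_of_adj hadj))
    have hforce : IsPSDForcingSet G B := ⟨1, by simpa using key⟩
    have hpt : psdPt G B ≤ 1 := Nat.sInf_le (by simpa using key)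
    have hth : psdTh G ≤ (Aᶜ : Finset V).card + psdPt G B :=
      Nat.sInf_le ⟨Aᶜ, hforce, rfl⟩
    have hcardc : (Aᶜ : Finset V).card = Fintype.card V - indepNumber G := by
      rw [Finset.card_compl, hAcard]
      rfl
    rw [hcardc] at hth
    omega
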